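/- Let T be a μ-way latin trade and let i₁ ≠ i₂ be rows such that cells (i₁,j) and (i₂,j) are both nonempty. If |C_j| = μ+1 and |R_{i₁}| = |R_{i₂}| = μ, then R_{i₁} ∪ R_{i₂} = C_j and |R_{i₁} ∩ R_{i₂}| = μ−1. -/

import Mathlib

/-- A partial latin rectangle on an `r × n` array with natural-number symbols:
each symbol occurs at most once in each row and in each column. -/
def IsPartialLatinRect {r n : ℕ} (f : Fin r → Fin n → Option ℕ) : Prop :=
  (∀ i j₁ j₂ s, f i j₁ = some s → f i j₂ = some s → j₁ = j₂) ∧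
  (∀ i₁ i₂ j s, f i₁ j = some s → f i₂ j = some s → i₁ = i₂)

/-- A μ-way latin trade: μ partial latin rectangles with the same filled cells,
pairwise distinct entries in each filled cell, and common row symbol sets and
column symbol sets. -/
def IsMuWayLatinTrade {μ r n : ℕ} (T : Fin μ → Fin r → Fin n → Option ℕ) : Prop :=
  (∀ m, IsPartialLatinRect (T m)) ∧
  (∀ m m' i j, (T m i j).isSome → (T m' i j).isSome) ∧
  (∀ m m' i j, m ≠ m' → (T m i j).isSome → T m i j ≠ T m' i j) ∧
  (∀ m m' i, {s | ∃ j, T m i j = some s} = {s | ∃ j, T m' i j = some s}) ∧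
  (∀ m m' j, {s | ∃ i, T m i j = some s} = {s | ∃ i, T m' i j = some s})

/-- The set `R i` of symbols appearing in row `i` (common to all μ rectangles). -/
def rowSet {μ r n : ℕ} (T : Fin μ → Fin r → Fin n → Option ℕ) (i : Fin r) : Set ℕ :=
  {s | ∃ m j, T m i j = some s}

/-- The set `C j` of symbols appearing in column `j` (common to all μ rectangles). -/
def colSet {μ r n : ℕ} (T : Fin μ → Fin r → Fin n → Option ℕ) (j : Fin n) : Set ℕ :=
  {s | ∃ m i, T m i j = some s}

/-- The volume of a trade: the number of filled cells. -/
def tradeVolume {μ r n : ℕ} (T : Fin μ → Fin r → Fin n → Option ℕ) : ℕ :=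
  (Finset.univ.filter fun p : Fin r × Fin n => ∃ m, (T m p.1 p.2).isSome).card

theorem stmt_2 {μ r n : ℕ} (T : Fin μ → Fin r → Fin n → Option ℕ)
    (hT : IsMuWayLatinTrade T) (i₁ i₂ : Fin r) (j : Fin n) (hne : i₁ ≠ i₂)
    (h1 : ∃ m, (T m i₁ j).isSome) (h2 : ∃ m, (T m i₂ j).isSome)
    (hC : (colSet T j).ncard = μ + 1)
    (hR1 : (rowSet T i₁).ncard = μ) (hR2 : (rowSet T i₂).ncard = μ) :
    rowSet T i₁ ∪ rowSet T i₂ = colSet T j ∧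
      (rowSet T i₁ ∩ rowSet T i₂).ncard = μ - 1 := by
  obtain ⟨hlatin, hsome, hdist, hrowEq, hcolEq⟩ := hT
  obtain ⟨m₀, hm₀⟩ := h1
  obtain ⟨m₁, hm₁⟩ := h2
  have hS1 : ∀ m, (T m i₁ j).isSome := fun m => hsome m₀ m i₁ j hm₀
  have hS2 : ∀ m, (T m i₂ j).isSome := fun m => hsome m₁ m i₂ j hm₁
  -- the values at cells (i₁,j) and (i₂,j)
  set v₁ : Fin μ → ℕ := fun m => (T m i₁ j).getD 0 with hv₁def
  set v₂ : Fin μ → ℕ := fun m => (T m i₂ j).getD 0 with hv₂def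
  have hv₁ : ∀ m, T m i₁ j = some (v₁ m) := by
    intro m; have h := hS1 m
    cases hE : T m i₁ j with
    | none => rw [hE] at h; simp at h
    | some s => simp [hv₁def, hE]
  have hv₂ : ∀ m, T m i₂ j = some (v₂ m) := by
    intro m; have h := hS2 m
    cases hE : T m i₂ j with
    | none => rw [hE] at h; simp at h
    | some s => simp [hv₂def, hE]
  have hinj1 : Function.Injective v₁ := by
    intro m m' h
    by_contra hne'
    exact hdist m m' i₁ j hne' (hS1 m) (by rw [hv₁ m, hv₁ m', h])
  have hinj2 : Function.Injective v₂ := by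
    intro m m' h
    by_contra hne'
    exact hdist m m' i₂ j hne' (hS2 m) (by rw [hv₂ m, hv₂ m', h])
  -- row sets are exactly the values at the cells in column j
  have hfin1 : (rowSet T i₁).Finite := by
    apply Set.finite_of_ncard_ne_zero
    rw [hR1]; exact Fin.pos m₀ |>.ne'
  have hfin2 : (rowSet T i₂).Finite := by
    apply Set.finite_of_ncard_ne_zero
    rw [hR2]; exact Fin.pos m₀ |>.ne'
  have hr1 : rowSet T i₁ = Set.range v₁ := by
    refine (Set.eq_of_subset_of_ncard_le ?_ ?_ hfin1).symm
    · rintro s ⟨m, rfl⟩; exact ⟨m, j, hv₁ m⟩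
    · rw [hR1, Set.ncard_eq_toFinset_card' , Set.toFinset_range,
        Finset.card_image_of_injective _ hinj1, Finset.card_univ, Fintype.card_fin]
  have hr2 : rowSet T i₂ = Set.range v₂ := by
    refine (Set.eq_of_subset_of_ncard_le ?_ ?_ hfin2).symm
    · rintro s ⟨m, rfl⟩; exact ⟨m, j, hv₂ m⟩
    · rw [hR2, Set.ncard_eq_toFinset_card' , Set.toFinset_range,
        Finset.card_image_of_injective _ hinj2, Finset.card_univ, Fintype.card_fin]
  have hsub1 : rowSet T i₁ ⊆ colSet T j := by
    rw [hr1]; rintro s ⟨m, rfl⟩; exact ⟨m, i₁, hv₁ m⟩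
  have hsub2 : rowSet T i₂ ⊆ colSet T j := by
    rw [hr2]; rintro s ⟨m, rfl⟩; exact ⟨m, i₂, hv₂ m⟩
  have hCfin : (colSet T j).Finite := by
    apply Set.finite_of_ncard_ne_zero; rw [hC]; omega
  -- the union equals the column set
  have hunion : rowSet T i₁ ∪ rowSet T i₂ = colSet T j := by
    refine Set.eq_of_subset_of_ncard_le (Set.union_subset hsub1 hsub2) ?_ hCfin
    by_contra hlt
    push_neg at hlt
    have hule : (rowSet T i₁ ∪ rowSet T i₂).ncard ≤ μ := by
      have := Set.ncard_union_le (rowSet T i₁) (rowSet T i₂)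
      rw [hC] at hlt
      omega
    -- so there is a symbol x in the column set missing from both rows
    obtain ⟨x, hxC, hxU⟩ : ∃ x ∈ colSet T j, x ∉ rowSet T i₁ ∪ rowSet T i₂ := by
      by_contra hcon
      push_neg at hcon
      have := Set.ncard_le_ncard hcon ((hfin1.union hfin2))
      rw [hC] at this; omega
    -- for every rectangle m, x appears in column j at some row
    have hx : ∀ m, ∃ i, T m i j = some x := by
      intro m
      obtain ⟨m', i, hi⟩ := hxC
      have : x ∈ {s | ∃ i, T m i j = some s} := by
        rw [hcolEq m m' j]; exact ⟨i, hi⟩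
      exact this
    choose g hg using hx
    have hginj : Function.Injective g := by
      intro m m' h
      by_contra hne'
      exact hdist m m' (g m) j hne' (by rw [hg m]; rfl)
        (by rw [hg m, h, hg m'])
    have hg1 : ∀ m, g m ≠ i₁ := by
      intro m h
      exact hxU (Or.inl ⟨m, j, by rw [← h]; exact hg m⟩)
    have hg2 : ∀ m, g m ≠ i₂ := by
      intro m h
      exact hxU (Or.inr ⟨m, j, by rw [← h]; exact hg m⟩)
    -- count filled cells in column j via rectangle m₀
    have hDle : ∀ D : Finset (Fin r), (∀ i ∈ D, (T m₀ i j).isSome) → D.card ≤ μ + 1 := by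
      intro D hD
      have : D.card ≤ (hCfin.toFinset).card := by
        apply Finset.card_le_card_of_injOn (fun i => (T m₀ i j).getD 0)
        · intro i hi
          have h := hD i hi
          cases hE : T m₀ i j with
          | none => rw [hE] at h; simp at h
          | some s =>
            simp only [Set.Finite.mem_toFinset]
            exact (Set.Finite.mem_toFinset hCfin).mpr ⟨m₀, i, by simp [hE]⟩
        · intro a ha b hb hab
          have hA := hD a ha; have hB := hD b hb
          cases hEa : T m₀ a j with
          | none => rw [hEa] at hA; simp at hA
          | some s =>
            cases hEb : T m₀ b j with
            | none => rw [hEb] at hB; simp at hB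
            | some t =>
              simp only [hEa, hEb, Option.getD_some] at hab
              subst hab
              exact (hlatin m₀).2 a b j s hEa hEb
      rwa [← Set.ncard_eq_toFinset_card _ hCfin, hC] at this
    have hcard : (insert i₁ (insert i₂ (Finset.image g Finset.univ))).card = μ + 2 := by
      rw [Finset.card_insert_of_notMem, Finset.card_insert_of_notMem,
        Finset.card_image_of_injective _ hginj, Finset.card_univ, Fintype.card_fin]
      · simp only [Finset.mem_image, Finset.mem_univ, true_and]
        rintro ⟨m, hm⟩
        exact hg2 m hm
      · simp only [Finset.mem_insert, Finset.mem_image, Finset.mem_univ, true_and]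
        rintro (h | ⟨m, hm⟩)
        · exact hne h
        · exact hg1 m hm
    have := hDle (insert i₁ (insert i₂ (Finset.image g Finset.univ))) ?_
    · omega
    · intro i hi
      simp only [Finset.mem_insert, Finset.mem_image, Finset.mem_univ, true_and] at hi
      rcases hi with rfl | rfl | ⟨m, rfl⟩
      · exact hS1 m₀
      · exact hS2 m₀
      · exact hsome m m₀ (g m) j (by rw [hg m]; rfl)
  refine ⟨hunion, ?_⟩
  have hkey := Set.ncard_union_add_ncard_inter (rowSet T i₁) (rowSet T i₂) hfin1 hfin2
  rw [hunion, hC, hR1, hR2] at hkey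
  omega
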